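/- arXiv:2301.12014 — 2 statements merged into one kernel-verified Lean document; each statement's English description precedes it below -/
import Mathlib

section
/- Let G be a non-archimedean CLI Polish group. Then: (1) G is 0-CLI if and only if G = {1_G}; (2) G is L-0-CLI if and only if G is discrete; (3) G is 1-CLI if and only if G is TSI, i.e., G admits a compatible complete two-sided invariant metric. -/
noncomputable section

/-- `omegaPart a` is ω(a): the largest limit ordinal `≤ a`, or `0` if there is none. -/
def omegaPart (a : Ordinal) : Ordinal :=
  sSup {b : Ordinal | (b = 0 ∨ Order.IsSuccLimit b) ∧ b ≤ a}

/-- `IsTree lt` says that the binary relation `lt` on `T` is a tree order: it is irreflexive,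
transitive, and the set of predecessors of any node is finite and linearly ordered. -/
def IsTree {T : Type*} (lt : T → T → Prop) : Prop :=
  (∀ s, ¬ lt s s) ∧
  (∀ s t u, lt s t → lt t u → lt s u) ∧
  (∀ s, {t | lt t s}.Finite) ∧
  (∀ s t u, lt t s → lt u s → t = u ∨ lt t u ∨ lt u t)

/-- The length `lh s` of a node of a tree: the number of its strict predecessors. -/
def lh {T : Type*} (lt : T → T → Prop) (s : T) : ℕ :=
  Nat.card {t | lt t s}

/-- The rank `ρ(T)` of a tree `(T, lt)`: for a well-founded tree it is
`sup { ρ_T(s) + 1 : s ∈ T }` where `ρ_T(s) = sup { ρ_T(t) + 1 : s < t }`;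
for an ill-founded tree we use the junk value `0`. -/
def rhoRel {T : Type u} (lt : T → T → Prop) : Ordinal.{u} :=
  letI := Classical.dec (WellFounded (Function.swap lt))
  if h : WellFounded (Function.swap lt) then ⨆ s : T, Order.succ ((h.apply s).rank) else 0

/-- The nodes of the tree `T_ℰ^X` associated to a sequence `E` of (equivalence) relations
on `X`: pairs `(n, C)` where `C` is a non-singleton class `[x]_{E n}`. -/
def TreeNode (X : Type u) (E : ℕ → X → X → Prop) : Type u :=
  {p : ℕ × Set X // ∃ x : X, p.2 = {y | E p.1 x y} ∧ p.2 ≠ {x}}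

/-- The tree order on `T_ℰ^X`: `(n, C) < (m, D)` iff `n < m` and `C ⊇ D`. -/
def nodeLT {X : Type u} (E : ℕ → X → X → Prop) :
    TreeNode X E → TreeNode X E → Prop :=
  fun s t => s.1.1 < t.1.1 ∧ t.1.2 ⊆ s.1.2

/-- The tree `T_ℰ^X` is well-founded: no infinite strictly increasing sequence. -/
def TreeWF (X : Type u) (E : ℕ → X → X → Prop) : Prop :=
  WellFounded (Function.swap (nodeLT E))

/-- The rank `ρ(T_ℰ^X)`. -/
def treeRho (X : Type u) (E : ℕ → X → X → Prop) : Ordinal.{u} :=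
  rhoRel (nodeLT E)

/-- A Polish group: a topological group whose topology is Polish. -/
def IsPolishGroup (G : Type u) [Group G] [TopologicalSpace G] : Prop :=
  IsTopologicalGroup G ∧ PolishSpace G

/-- A topological group is non-archimedean if the open subgroups form a
neighborhood base of the identity. -/
def IsNonArch (G : Type u) [Group G] [TopologicalSpace G] : Prop :=
  ∀ U ∈ nhds (1 : G), ∃ H : Subgroup G, IsOpen (H : Set G) ∧ (H : Set G) ⊆ U

/-- A topological group is CLI if it admits a compatible complete left-invariant metric. -/
def IsCLI (G : Type u) [Group G] [TopologicalSpace G] : Prop :=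
  ∃ m : MetricSpace G,
    m.toUniformSpace.toTopologicalSpace = ‹TopologicalSpace G› ∧
    @CompleteSpace G m.toUniformSpace ∧
    ∀ g h k : G, m.dist (g * h) (g * k) = m.dist h k

/-- A topological group is TSI if it admits a compatible complete two-sided-invariant metric. -/
def IsTSI (G : Type u) [Group G] [TopologicalSpace G] : Prop :=
  ∃ m : MetricSpace G,
    m.toUniformSpace.toTopologicalSpace = ‹TopologicalSpace G› ∧
    @CompleteSpace G m.toUniformSpace ∧
    ∀ g h k : G, m.dist (g * h) (g * k) = m.dist h k ∧ m.dist (h * g) (k * g) = m.dist h k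

/-- `Dgnb G` is the set `dgnb(G)`: decreasing sequences `(G_n)` of open subgroups of `G`
with `G_0 = G` forming a neighborhood base of `1_G`. -/
structure Dgnb (G : Type u) [Group G] [TopologicalSpace G] where
  seq : ℕ → Subgroup G
  isOpen : ∀ n, IsOpen ((seq n : Set G))
  antitone : ∀ n, seq (n + 1) ≤ seq n
  zero_eq_top : seq 0 = ⊤
  basis : ∀ U ∈ nhds (1 : G), ∃ n, ((seq n : Set G)) ⊆ U

/-- The orbit equivalence relation of (the action of) a subgroup `H ≤ G` on a `G`-space `X`:
`x ∼ y` iff `g • x = y` for some `g ∈ H`. -/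
def subOrbit {G : Type u} [Group G] (H : Subgroup G) (X : Type v) [MulAction G X] :
    X → X → Prop :=
  fun x y => ∃ g ∈ H, g • x = y

/-- The tree `T_𝒢^X` of a `𝒢 ∈ dgnb(G)` and a `G`-space `X`: nodes are pairs `(n, C)`
with `C` a non-singleton `G_n`-orbit. We record it by its defining sequence of relations. -/
def dgnbRel {G : Type u} [Group G] [TopologicalSpace G] (𝒢 : Dgnb G) (X : Type v)
    [MulAction G X] : ℕ → X → X → Prop :=
  fun n => subOrbit (𝒢.seq n) X

/-- `ρ^k(𝒢) = ρ(T_𝒢^{G/G_k})`, where `G` acts by left translation on `G/G_k`. -/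
def rhoK {G : Type u} [Group G] [TopologicalSpace G] (𝒢 : Dgnb G) (k : ℕ) : Ordinal.{u} :=
  treeRho (G ⧸ 𝒢.seq k) (dgnbRel 𝒢 (G ⧸ 𝒢.seq k))

/-- `ρ(𝒢) = ρ(T_𝒢^{X(𝒢)})` where `X(𝒢) = ⊔_k G/G_k` is the disjoint union of the coset
spaces, with `G` acting by left translation on each summand. -/
def rhoDgnb {G : Type u} [Group G] [TopologicalSpace G] (𝒢 : Dgnb G) : Ordinal.{u} :=
  treeRho (Σ k : ℕ, G ⧸ 𝒢.seq k)
    (fun n p q => ∃ g ∈ 𝒢.seq n, q = ⟨p.1, g • p.2⟩)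

/-- `G` is α-CLI if `ρ(𝒢) ≤ ω·α` for any (equivalently, some) `𝒢 ∈ dgnb(G)`. -/
def IsAlphaCLI (G : Type u) [Group G] [TopologicalSpace G] (α : Ordinal.{u}) : Prop :=
  ∀ 𝒢 : Dgnb G, rhoDgnb 𝒢 ≤ Ordinal.omega0 * α

/-- `G` is L-α-CLI if `rank(G) ≤ α`, i.e. `ω(ρ(𝒢)) ≤ ω·α` for any (equivalently, some)
`𝒢 ∈ dgnb(G)`. -/
def IsLAlphaCLI (G : Type u) [Group G] [TopologicalSpace G] (α : Ordinal.{u}) : Prop :=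
  ∀ 𝒢 : Dgnb G, omegaPart (rhoDgnb 𝒢) ≤ Ordinal.omega0 * α


namespace StmtAux

open Ordinal

set_option linter.deprecated false

noncomputable def _root_.WellFounded.rank {α : Type u} {r : α → α → Prop} (hwf : WellFounded r)
    (a : α) : Ordinal.{u} :=
  (hwf.apply a).rank

theorem _root_.WellFounded.rank_eq {α : Type u} {r : α → α → Prop} (hwf : WellFounded r) (a : α) :
    hwf.rank a = ⨆ b : { b // r b a }, Order.succ (hwf.rank b) :=
  (hwf.apply a).rank_eq

theorem _root_.WellFounded.rank_lt_of_rel {α : Type u} {r : α → α → Prop} (hwf : WellFounded r)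
    {a b : α} (h : r a b) : hwf.rank a < hwf.rank b :=
  Acc.rank_lt_of_rel _ h

/-! ### Ordinal and omegaPart helpers -/

lemma omegaPart_eq_zero {a : Ordinal} (h : a < Ordinal.omega0) : omegaPart a = 0 := by
  unfold omegaPart
  have hset : {b : Ordinal | (b = 0 ∨ Order.IsSuccLimit b) ∧ b ≤ a} = {0} := by
    ext b
    simp only [Set.mem_setOf_eq, Set.mem_singleton_iff]
    constructor
    · rintro ⟨h0 | hl, hb⟩
      · exact h0
      · exact absurd (lt_of_le_of_lt hb h) (not_lt.2 (Ordinal.omega0_le_of_isSuccLimit hl))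
    · rintro rfl
      exact ⟨Or.inl rfl, zero_le (a := a)⟩
  rw [hset, csSup_singleton]

lemma omega0_le_omegaPart {a : Ordinal} (h : Ordinal.omega0 ≤ a) :
    Ordinal.omega0 ≤ omegaPart a := by
  refine le_csSup ⟨a, ?_⟩ ⟨Or.inr Ordinal.isSuccLimit_omega0, h⟩
  rintro b ⟨-, hb⟩
  exact hb

/-- chains give lower bounds on rank -/
lemma nat_le_rank {T : Type} {r : T → T → Prop} (hwf : WellFounded r) :
    ∀ (j : ℕ) (c : ℕ → T), (∀ i < j, r (c (i + 1)) (c i)) → (j : Ordinal) ≤ hwf.rank (c 0)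
  | 0, c, _ => by simp
  | (j+1), c, hc => by
    have h1 : (j : Ordinal) ≤ hwf.rank (c 1) := by
      have := nat_le_rank hwf j (fun i => c (i + 1)) (fun i hi => hc (i+1) (by omega))
      simpa using this
    have h2 : hwf.rank (c 1) < hwf.rank (c 0) := hwf.rank_lt_of_rel (hc 0 (by omega))
    have : (j : Ordinal) < hwf.rank (c 0) := lt_of_le_of_lt h1 h2
    rw [Nat.cast_succ, Ordinal.add_one_eq_succ]
    exact Order.succ_le_of_lt this

end StmtAux

namespace StmtAux

variable {G : Type} [Group G] [TopologicalSpace G]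

lemma dgnb_mono (𝒢 : Dgnb G) {m n : ℕ} (h : m ≤ n) : 𝒢.seq n ≤ 𝒢.seq m := by
  induction n, h using Nat.le_induction with
  | base => exact le_rfl
  | succ n hmn ih => exact (𝒢.antitone n).trans ih

section Tree

variable (𝒢 : Dgnb G)

/-- The space `X(𝒢)`. -/
abbrev XX : Type := Σ k : ℕ, G ⧸ 𝒢.seq k

/-- The sequence of relations defining `T_𝒢^{X(𝒢)}`. -/
abbrev EE : ℕ → XX 𝒢 → XX 𝒢 → Prop := fun n p q => ∃ g ∈ 𝒢.seq n, q = ⟨p.1, g • p.2⟩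

lemma rhoDgnb_def : rhoDgnb 𝒢 = rhoRel (nodeLT (EE 𝒢)) := rfl

variable {𝒢}

/-- The witness point of a node. -/
def wit (p : TreeNode (XX 𝒢) (EE 𝒢)) : XX 𝒢 := p.2.choose

lemma wit_spec (p : TreeNode (XX 𝒢) (EE 𝒢)) :
    p.1.2 = {y | EE 𝒢 p.1.1 (wit p) y} ∧ p.1.2 ≠ {wit p} := p.2.choose_spec

lemma wit_mem (p : TreeNode (XX 𝒢) (EE 𝒢)) : wit p ∈ p.1.2 := by
  rw [(wit_spec p).1]
  exact ⟨1, one_mem _, by rw [one_smul]⟩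

lemma fst_of_mem {p : TreeNode (XX 𝒢) (EE 𝒢)} {y : XX 𝒢} (hy : y ∈ p.1.2) :
    y.1 = (wit p).1 := by
  rw [(wit_spec p).1] at hy
  obtain ⟨g, -, rfl⟩ := hy
  rfl

lemma wit_fst_eq {p q : TreeNode (XX 𝒢) (EE 𝒢)} (h : nodeLT (EE 𝒢) p q) :
    (wit q).1 = (wit p).1 :=
  fst_of_mem (h.2 (wit_mem q))

/-- If `G_{M k}` acts trivially on `G ⧸ G_k` then every node over summand `k` has
index `< M k`. -/
lemma node_lt_bound {M : ℕ → ℕ}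
    (hM : ∀ k, ∀ g ∈ 𝒢.seq (M k), ∀ z : G ⧸ 𝒢.seq k, g • z = z)
    (p : TreeNode (XX 𝒢) (EE 𝒢)) : p.1.1 < M (wit p).1 := by
  by_contra hcon
  push_neg at hcon
  apply (wit_spec p).2
  rw [(wit_spec p).1]
  ext y
  simp only [Set.mem_setOf_eq, Set.mem_singleton_iff]
  constructor
  · rintro ⟨g, hg, rfl⟩
    have : g • (wit p).2 = (wit p).2 :=
      hM (wit p).1 g (dgnb_mono 𝒢 hcon hg) (wit p).2
    rw [this]
  · rintro rfl
    exact ⟨1, one_mem _, by rw [one_smul]⟩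

lemma wf_of_bound {M : ℕ → ℕ}
    (hM : ∀ k, ∀ g ∈ 𝒢.seq (M k), ∀ z : G ⧸ 𝒢.seq k, g • z = z) :
    WellFounded (Function.swap (nodeLT (EE 𝒢))) := by
  have hinv : WellFounded (InvImage (· < ·) (fun p : TreeNode (XX 𝒢) (EE 𝒢) => M (wit p).1 - p.1.1)) :=
    InvImage.wf _ Nat.lt_wfRel.wf
  refine Subrelation.wf ?_ hinv
  intro a b hab
  show M (wit a).1 - a.1.1 < M (wit b).1 - b.1.1
  have h1 : (wit a).1 = (wit b).1 := wit_fst_eq hab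
  have h2 := node_lt_bound hM a
  have h3 : b.1.1 < a.1.1 := hab.1
  rw [h1] at h2 ⊢
  omega

lemma rank_lt_of_bound {M : ℕ → ℕ}
    (hM : ∀ k, ∀ g ∈ 𝒢.seq (M k), ∀ z : G ⧸ 𝒢.seq k, g • z = z)
    (hwf : WellFounded (Function.swap (nodeLT (EE 𝒢))))
    (p : TreeNode (XX 𝒢) (EE 𝒢)) :
    hwf.rank p < ((M (wit p).1 - p.1.1 : ℕ) : Ordinal) := by
  induction p using hwf.induction with
  | _ p IH =>
    have hn := node_lt_bound hM p
    have hle : hwf.rank p ≤ ((M (wit p).1 - p.1.1 - 1 : ℕ) : Ordinal) := by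
      rw [hwf.rank_eq]
      apply Ordinal.iSup_le
      rintro ⟨q, hq⟩
      have hk : (wit q).1 = (wit p).1 := wit_fst_eq hq
      have hlt : p.1.1 < q.1.1 := hq.1
      have h1 : hwf.rank q < ((M (wit q).1 - q.1.1 : ℕ) : Ordinal) := IH q hq
      have h2 : ((M (wit q).1 - q.1.1 : ℕ) : Ordinal) ≤
          ((M (wit p).1 - p.1.1 - 1 : ℕ) : Ordinal) := by
        rw [hk]
        exact_mod_cast (by omega : M (wit p).1 - q.1.1 ≤ M (wit p).1 - p.1.1 - 1)
      exact Order.succ_le_of_lt (h1.trans_le h2)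
    exact lt_of_le_of_lt hle (by exact_mod_cast (by omega : M (wit p).1 - p.1.1 - 1 < M (wit p).1 - p.1.1))

lemma rho_le_of_bound {M : ℕ → ℕ}
    (hM : ∀ k, ∀ g ∈ 𝒢.seq (M k), ∀ z : G ⧸ 𝒢.seq k, g • z = z)
    {c : Ordinal} (hc : ∀ k, ((M k : ℕ) : Ordinal) ≤ c) :
    rhoDgnb 𝒢 ≤ c := by
  have hwf := wf_of_bound hM
  rw [rhoDgnb_def]
  unfold rhoRel
  rw [dif_pos hwf]
  apply Ordinal.iSup_le
  intro p
  have h1 := rank_lt_of_bound hM hwf p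
  have h2 : ((M (wit p).1 - p.1.1 : ℕ) : Ordinal) ≤ ((M (wit p).1 : ℕ) : Ordinal) := by
    exact_mod_cast Nat.sub_le _ _
  exact (Order.succ_le_of_lt (h1.trans_le h2)).trans (hc _)

end Tree
end StmtAux

namespace StmtAux

variable {G : Type} [Group G] [TopologicalSpace G]

section Basis

variable [IsTopologicalGroup G] [PolishSpace G]

omit [IsTopologicalGroup G] in
lemma exists_nhds_not_mem {g : G} (hg : g ≠ 1) : ∃ U ∈ nhds (1 : G), g ∉ U :=
  ⟨{g}ᶜ, compl_singleton_mem_nhds (Ne.symm hg), by simp⟩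

lemma exists_seq_not_mem (𝒢 : Dgnb G) {g : G} (hg : g ≠ 1) : ∃ k, g ∉ 𝒢.seq k := by
  obtain ⟨U, hU, hgU⟩ := exists_nhds_not_mem hg
  obtain ⟨k, hk⟩ := 𝒢.basis U hU
  exact ⟨k, fun h => hgU (hk h)⟩

lemma exists_dgnb_pred (P : Subgroup G → Prop) (hPtop : P ⊤)
    (hPinf : ∀ H K : Subgroup G, P H → P K → P (H ⊓ K))
    (hb : ∀ U ∈ nhds (1 : G), ∃ H : Subgroup G, P H ∧ IsOpen (H : Set G) ∧ (H : Set G) ⊆ U) :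
    ∃ 𝒢 : Dgnb G, ∀ n, P (𝒢.seq n) := by
  obtain ⟨u, hu⟩ := (nhds (1 : G)).exists_antitone_basis
  have humem : ∀ n, u n ∈ nhds (1 : G) := fun n => hu.toHasBasis.mem_of_mem trivial
  choose Hf hP hopen hsub using fun n => hb (u n) (humem n)
  obtain ⟨K, hK0, hKs⟩ : ∃ K : ℕ → Subgroup G, K 0 = ⊤ ∧ ∀ n, K (n+1) = K n ⊓ Hf n :=
    ⟨fun n => Nat.rec ⊤ (fun n Kn => Kn ⊓ Hf n) n, rfl, fun n => rfl⟩
  have hKP : ∀ n, P (K n) := by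
    intro n
    induction n with
    | zero => rw [hK0]; exact hPtop
    | succ n ih => rw [hKs n]; exact hPinf _ _ ih (hP n)
  have hKopen : ∀ n, IsOpen ((K n : Set G)) := by
    intro n
    induction n with
    | zero => rw [hK0, Subgroup.coe_top]; exact isOpen_univ
    | succ n ih =>
      rw [hKs n, Subgroup.coe_inf]
      exact ih.inter (hopen n)
  refine ⟨⟨K, hKopen, fun n => (hKs n).le.trans inf_le_left, hK0, ?_⟩, hKP⟩
  intro U hU
  obtain ⟨n, -, hn⟩ := hu.toHasBasis.mem_iff.1 hU
  refine ⟨n + 1, subset_trans ?_ (subset_trans (hsub n) hn)⟩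
  exact SetLike.coe_subset_coe.2 ((hKs n).le.trans inf_le_right)

lemma exists_dgnb (hna : IsNonArch G) : Nonempty (Dgnb G) := by
  obtain ⟨𝒢, -⟩ := exists_dgnb_pred (fun _ => True) trivial (fun _ _ _ _ => trivial)
    (fun U hU => by obtain ⟨H, h1, h2⟩ := hna U hU; exact ⟨H, trivial, h1, h2⟩)
  exact ⟨𝒢⟩

end Basis
end StmtAux

namespace StmtAux

variable {G : Type} [Group G] [TopologicalSpace G] [IsTopologicalGroup G]

set_option maxHeartbeats 1000000 in
lemma wf_of_cli (hcli : IsCLI G) (𝒢 : Dgnb G) :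
    WellFounded (Function.swap (nodeLT (EE 𝒢))) := by
  obtain ⟨m, htop, hcomp, hinv⟩ := hcli
  haveI : IsIrrefl (TreeNode (XX 𝒢) (EE 𝒢)) (Function.swap (nodeLT (EE 𝒢))) :=
    ⟨fun a h => lt_irrefl _ h.1⟩
  haveI : IsTrans (TreeNode (XX 𝒢) (EE 𝒢)) (Function.swap (nodeLT (EE 𝒢))) :=
    ⟨fun a b c hab hbc => ⟨hbc.1.trans hab.1, hab.2.trans hbc.2⟩⟩
  haveI : IsStrictOrder (TreeNode (XX 𝒢) (EE 𝒢)) (Function.swap (nodeLT (EE 𝒢))) :=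
    ⟨⟩
  rw [RelEmbedding.wellFounded_iff_isEmpty]
  by_contra hne
  rw [not_isEmpty_iff] at hne
  obtain ⟨f⟩ := hne
  have hstep : ∀ i : ℕ, nodeLT (EE 𝒢) (f i) (f (i + 1)) := fun i =>
    f.map_rel_iff.2 (Nat.lt_succ_self i)
  -- notation
  set x : ℕ → XX 𝒢 := fun i => wit (f i) with hxdef
  have hn : ∀ i, (f i).1.1 < (f (i + 1)).1.1 := fun i => (hstep i).1
  have hnm : ∀ i j, i ≤ j → (f i).1.1 ≤ (f j).1.1 := by
    intro i j hij
    induction j, hij using Nat.le_induction with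
    | base => exact le_rfl
    | succ j hij ih => exact ih.trans (hn j).le
  have hni : ∀ i, i ≤ (f i).1.1 := by
    intro i
    induction i with
    | zero => exact Nat.zero_le _
    | succ i ih => exact Nat.succ_le_of_lt (lt_of_le_of_lt ih (hn i))
  -- successive witnesses
  have hxmem : ∀ i, ∃ g ∈ 𝒢.seq ((f i).1.1), x (i + 1) = ⟨(x i).1, g • (x i).2⟩ := by
    intro i
    have h1 : x (i + 1) ∈ (f i).1.2 := (hstep i).2 (wit_mem (f (i + 1)))
    rw [(wit_spec (f i)).1] at h1
    exact h1
  choose g hg hgx using hxmem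
  obtain ⟨u, hu0, hus⟩ : ∃ u : ℕ → G, u 0 = 1 ∧ ∀ i, u (i + 1) = g i * u i :=
    ⟨fun i => Nat.rec 1 (fun i ui => g i * ui) i, rfl, fun i => rfl⟩
  have hxi : ∀ i, x i = ⟨(x 0).1, u i • (x 0).2⟩ := by
    intro i
    induction i with
    | zero => rw [hu0, one_smul]
    | succ i ih =>
      rw [hgx i, ih, hus i]
      show (⟨(x 0).1, g i • (u i • (x 0).2)⟩ : XX 𝒢) = ⟨(x 0).1, (g i * u i) • (x 0).2⟩
      rw [smul_smul]
  -- group elements form a "right Cauchy" sequence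
  have hgrp : ∀ i j, i ≤ j → u j * (u i)⁻¹ ∈ 𝒢.seq ((f i).1.1) := by
    intro i j hij
    induction j, hij using Nat.le_induction with
    | base => rw [mul_inv_cancel]; exact one_mem _
    | succ j hij ih =>
      rw [hus j, mul_assoc]
      exact mul_mem (dgnb_mono 𝒢 (hnm i j hij) (hg j)) ih
  have memN : ∀ N i j, N ≤ i → N ≤ j → u i * (u j)⁻¹ ∈ 𝒢.seq N := by
    intro N i j hi hj
    rcases le_total i j with h | h
    · have h2 := inv_mem (hgrp i j h)
      rw [mul_inv_rev, inv_inv] at h2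
      exact dgnb_mono 𝒢 (hi.trans (hni i)) h2
    · exact dgnb_mono 𝒢 (hj.trans (hni j)) (hgrp j i h)
  -- the inverses form a Cauchy sequence for the left-invariant metric
  have hcauchy : @CauchySeq G ℕ m.toUniformSpace _ (fun i => (u i)⁻¹) := by
    rw [@Metric.cauchySeq_iff G ℕ m.toPseudoMetricSpace _ _ _]
    intro ε hε
    have hball : {w : G | m.dist w 1 < ε} ∈ nhds (1 : G) := by
      have hopen := @Metric.isOpen_ball G m.toPseudoMetricSpace 1 ε
      rw [htop] at hopen
      have h1 : (1 : G) ∈ @Metric.ball G m.toPseudoMetricSpace 1 ε := by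
        show m.dist 1 1 < ε
        rw [m.dist_self]
        exact hε
      exact hopen.mem_nhds h1
    obtain ⟨N, hN⟩ := 𝒢.basis _ hball
    refine ⟨N, fun i hi j hj => ?_⟩
    have key : m.dist ((u i)⁻¹) ((u j)⁻¹) = m.dist 1 (u i * (u j)⁻¹) := by
      have h3 := hinv ((u i)⁻¹) 1 (u i * (u j)⁻¹)
      rw [mul_one] at h3
      rw [← h3]
      congr 1
      group
    show m.dist ((u i)⁻¹) ((u j)⁻¹) < ε
    rw [key, m.dist_comm]
    exact hN (memN N i j hi hj)
  obtain ⟨c, hc⟩ := @cauchySeq_tendsto_of_complete G ℕ m.toUniformSpace _ hcomp _ hcauchy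
  rw [htop] at hc
  have hu' : Filter.Tendsto u Filter.atTop (nhds c⁻¹) := by
    have h4 := hc.inv
    simpa using h4
  -- representative of the base point
  obtain ⟨w₀, hw₀⟩ := QuotientGroup.mk_surjective (x 0).2
  set k := (x 0).1
  set zb : G ⧸ 𝒢.seq k := c⁻¹ • (x 0).2 with hzb
  -- eventually `u i • (x 0).2 = zb`
  have hV : {a : G | a • (x 0).2 = zb} ∈ nhds c⁻¹ := by
    have hopen : IsOpen ((fun a : G => (c⁻¹ * w₀)⁻¹ * a * w₀) ⁻¹' (𝒢.seq k : Set G)) :=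
      ((𝒢.isOpen k).preimage ((continuous_const.mul continuous_id).mul continuous_const))
    have hmem : c⁻¹ ∈ (fun a : G => (c⁻¹ * w₀)⁻¹ * a * w₀) ⁻¹' (𝒢.seq k : Set G) := by
      show (c⁻¹ * w₀)⁻¹ * c⁻¹ * w₀ ∈ 𝒢.seq k
      have : (c⁻¹ * w₀)⁻¹ * c⁻¹ * w₀ = 1 := by group
      rw [this]
      exact one_mem _
    refine Filter.mem_of_superset (hopen.mem_nhds hmem) ?_
    intro a ha
    show a • (x 0).2 = zb
    rw [hzb, ← hw₀]
    show a • (QuotientGroup.mk w₀ : G ⧸ 𝒢.seq k) = c⁻¹ • (QuotientGroup.mk w₀ : G ⧸ 𝒢.seq k)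
    show (QuotientGroup.mk (a * w₀) : G ⧸ 𝒢.seq k) = QuotientGroup.mk (c⁻¹ * w₀)
    rw [QuotientGroup.eq]
    have heq : (a * w₀)⁻¹ * (c⁻¹ * w₀) = ((c⁻¹ * w₀)⁻¹ * a * w₀)⁻¹ := by group
    rw [heq]
    exact inv_mem ha
  have hev : ∃ I, ∀ i ≥ I, u i • (x 0).2 = zb := by
    have h5 := hu' hV
    rw [Filter.mem_map, Filter.mem_atTop_sets] at h5
    obtain ⟨I, hI⟩ := h5
    exact ⟨I, fun i hi => hI i hi⟩
  obtain ⟨I, hI⟩ := hev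
  -- a subgroup stabilizing `zb`
  have hW : {a : G | a • zb = zb} ∈ nhds (1 : G) := by
    have hopen : IsOpen ((fun a : G => (c⁻¹ * w₀)⁻¹ * a * (c⁻¹ * w₀)) ⁻¹' (𝒢.seq k : Set G)) :=
      ((𝒢.isOpen k).preimage ((continuous_const.mul continuous_id).mul continuous_const))
    have hmem : (1 : G) ∈ (fun a : G => (c⁻¹ * w₀)⁻¹ * a * (c⁻¹ * w₀)) ⁻¹' (𝒢.seq k : Set G) := by
      show (c⁻¹ * w₀)⁻¹ * 1 * (c⁻¹ * w₀) ∈ 𝒢.seq k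
      have : (c⁻¹ * w₀)⁻¹ * 1 * (c⁻¹ * w₀) = 1 := by group
      rw [this]
      exact one_mem _
    refine Filter.mem_of_superset (hopen.mem_nhds hmem) ?_
    intro a ha
    show a • zb = zb
    have hzb' : zb = QuotientGroup.mk (c⁻¹ * w₀) := by
      rw [hzb, ← hw₀]; rfl
    rw [hzb']
    show (QuotientGroup.mk (a * (c⁻¹ * w₀)) : G ⧸ 𝒢.seq k) = QuotientGroup.mk (c⁻¹ * w₀)
    rw [QuotientGroup.eq]
    have heq : (a * (c⁻¹ * w₀))⁻¹ * (c⁻¹ * w₀) = ((c⁻¹ * w₀)⁻¹ * a * (c⁻¹ * w₀))⁻¹ := by group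
    rw [heq]
    exact inv_mem ha
  obtain ⟨M, hM⟩ := 𝒢.basis _ hW
  -- contradiction at stage `i := max I M`
  set i := max I M
  have hxi' : x i = ⟨k, zb⟩ := by
    rw [hxi i, hI i (le_max_left I M)]
  apply (wit_spec (f i)).2
  rw [(wit_spec (f i)).1]
  have hwitx : wit (f i) = x i := rfl
  rw [hwitx, hxi']
  ext y
  simp only [Set.mem_setOf_eq, Set.mem_singleton_iff]
  constructor
  · rintro ⟨h, hh, rfl⟩
    have hhM : h ∈ 𝒢.seq M := dgnb_mono 𝒢 ((le_max_right I M).trans (hni i)) hh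
    have : h • zb = zb := hM hhM
    show (⟨k, h • zb⟩ : XX 𝒢) = ⟨k, zb⟩
    rw [this]
  · rintro rfl
    exact ⟨1, one_mem _, by rw [one_smul]⟩

end StmtAux

namespace StmtAux

variable {G : Type} [Group G] [TopologicalSpace G]

section Nodes

variable (𝒢 : Dgnb G)

/-- A node of the tree built from a point with non-singleton orbit. -/
def mkNode (n k : ℕ) (z : G ⧸ 𝒢.seq k) (g : G) (hg : g ∈ 𝒢.seq n) (hne : g • z ≠ z) :
    TreeNode (XX 𝒢) (EE 𝒢) := by
  refine ⟨(n, {y | EE 𝒢 n ⟨k, z⟩ y}), ⟨k, z⟩, rfl, ?_⟩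
  intro hcon
  have h1 : (⟨k, g • z⟩ : XX 𝒢) ∈ ((n, {y | EE 𝒢 n ⟨k, z⟩ y}) : ℕ × Set (XX 𝒢)).2 :=
    ⟨g, hg, rfl⟩
  rw [hcon] at h1
  have h2 : g • z = z := eq_of_heq (Sigma.mk.inj_iff.1 h1).2
  exact hne h2

variable {𝒢}

lemma mkNode_congr {n n' k : ℕ} (h : n = n') {z : G ⧸ 𝒢.seq k} {g : G}
    (hg : g ∈ 𝒢.seq n) (hg' : g ∈ 𝒢.seq n') (hne : g • z ≠ z) :
    mkNode 𝒢 n k z g hg hne = mkNode 𝒢 n' k z g hg' hne := by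
  subst h; rfl

lemma mkNode_lt {n n' k : ℕ} (h : n < n') {z : G ⧸ 𝒢.seq k} {g : G}
    (hg : g ∈ 𝒢.seq n) (hg' : g ∈ 𝒢.seq n') (hne : g • z ≠ z) :
    nodeLT (EE 𝒢) (mkNode 𝒢 n k z g hg hne) (mkNode 𝒢 n' k z g hg' hne) := by
  refine ⟨h, ?_⟩
  rintro y ⟨h', hh', rfl⟩
  exact ⟨h', dgnb_mono 𝒢 h.le hh', rfl⟩

lemma exists_rank_ge (hwf : WellFounded (Function.swap (nodeLT (EE 𝒢))))
    {N k : ℕ} {z : G ⧸ 𝒢.seq k} {g : G} (hg : g ∈ 𝒢.seq N) (hne : g • z ≠ z) :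
    (N : Ordinal) ≤ hwf.rank (mkNode 𝒢 0 k z g (dgnb_mono 𝒢 (Nat.zero_le N) hg) hne) := by
  have hc := nat_le_rank hwf N
    (fun j => mkNode 𝒢 (min j N) k z g (dgnb_mono 𝒢 (min_le_right j N) hg) hne) ?_
  · have h0 : mkNode 𝒢 (min 0 N) k z g (dgnb_mono 𝒢 (min_le_right 0 N) hg) hne =
        mkNode 𝒢 0 k z g (dgnb_mono 𝒢 (Nat.zero_le N) hg) hne :=
      mkNode_congr (Nat.zero_min N) _ _ _
    rwa [h0] at hc
  · intro i hi
    show nodeLT (EE 𝒢) _ _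
    exact mkNode_lt (by omega) _ _ _

lemma lt_rho (hwf : WellFounded (Function.swap (nodeLT (EE 𝒢))))
    {N k : ℕ} {z : G ⧸ 𝒢.seq k} {g : G} (hg : g ∈ 𝒢.seq N) (hne : g • z ≠ z) :
    (N : Ordinal) < rhoDgnb 𝒢 := by
  rw [rhoDgnb_def]
  unfold rhoRel
  rw [dif_pos hwf]
  have h1 := exists_rank_ge hwf hg hne
  have h2 : Order.succ (hwf.rank (mkNode 𝒢 0 k z g (dgnb_mono 𝒢 (Nat.zero_le N) hg) hne)) ≤
      ⨆ s : TreeNode (XX 𝒢) (EE 𝒢), Order.succ (hwf.rank s) :=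
    Ordinal.le_iSup _ _
  exact lt_of_lt_of_le (h1.trans_lt (Order.lt_succ _)) h2

/-- All the level-0 nodes over summand `k` coincide. -/
lemma mkNode_zero_eq {k : ℕ} {z z' : G ⧸ 𝒢.seq k} {g g' : G}
    (hg : g ∈ 𝒢.seq 0) (hg' : g' ∈ 𝒢.seq 0) (hne : g • z ≠ z) (hne' : g' • z' ≠ z') :
    mkNode 𝒢 0 k z g hg hne = mkNode 𝒢 0 k z' g' hg' hne' := by
  suffices hset : {y | EE 𝒢 0 ⟨k, z⟩ y} = {y | EE 𝒢 0 ⟨k, z'⟩ y} by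
    apply Subtype.ext
    show ((0, {y | EE 𝒢 0 ⟨k, z⟩ y}) : ℕ × Set (XX 𝒢)) = (0, {y | EE 𝒢 0 ⟨k, z'⟩ y})
    rw [hset]
  have htop : ∀ a : G, a ∈ 𝒢.seq 0 := by
    intro a; rw [𝒢.zero_eq_top]; exact Subgroup.mem_top a
  obtain ⟨a, ha⟩ := QuotientGroup.mk_surjective z
  obtain ⟨b, hb⟩ := QuotientGroup.mk_surjective z'
  ext y
  constructor
  · rintro ⟨h, -, rfl⟩
    refine ⟨h * a * b⁻¹, htop _, ?_⟩
    have : (h * a * b⁻¹) • z' = h • z := by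
      rw [← ha, ← hb]
      show (QuotientGroup.mk ((h * a * b⁻¹) * b) : G ⧸ 𝒢.seq k) = QuotientGroup.mk (h * a)
      congr 1
      group
    rw [this]
  · rintro ⟨h, -, rfl⟩
    refine ⟨h * b * a⁻¹, htop _, ?_⟩
    have : (h * b * a⁻¹) • z = h • z' := by
      rw [← ha, ← hb]
      show (QuotientGroup.mk ((h * b * a⁻¹) * a) : G ⧸ 𝒢.seq k) = QuotientGroup.mk (h * b)
      congr 1
      group
    rw [this]

end Nodes
end StmtAux

namespace StmtAux

variable {G : Type} [Group G] [TopologicalSpace G] [IsTopologicalGroup G]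

/-- In a TSI group, metric balls around 1 are conjugation-invariant, so every neighborhood
of 1 contains an open normal subgroup (given non-archimedeanness). -/
lemma normal_basis_of_tsi (hna : IsNonArch G) (htsi : IsTSI G) :
    ∀ U ∈ nhds (1 : G), ∃ N : Subgroup G, N.Normal ∧ IsOpen (N : Set G) ∧ (N : Set G) ⊆ U := by
  obtain ⟨m, htop, hcomp, hbi⟩ := htsi
  intro U hU
  obtain ⟨V, hVopen, hVU⟩ := hna U hU
  -- conjugation invariance of the distance to 1
  have hconj : ∀ a x : G, m.dist (a * x * a⁻¹) 1 = m.dist x 1 := by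
    intro a x
    have h1 : m.dist ((a * x * a⁻¹) * a) (1 * a) = m.dist (a * x * a⁻¹) 1 := (hbi a (a*x*a⁻¹) 1).2
    have h2 : m.dist (a * x) (a * 1) = m.dist x 1 := (hbi a x 1).1
    rw [mul_one] at h2
    rw [one_mul, inv_mul_cancel_right] at h1
    rw [← h1, h2]
  -- a small metric ball is inside V
  have hVnhds : (V : Set G) ∈ @nhds G m.toUniformSpace.toTopologicalSpace 1 := by
    rw [htop]
    exact hVopen.mem_nhds (one_mem V)
  obtain ⟨ε, hε, hball⟩ := (@Metric.mem_nhds_iff G m.toPseudoMetricSpace _ _).1 hVnhds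
  refine ⟨{ carrier := {g | ∀ a : G, a * g * a⁻¹ ∈ V},
            one_mem' := by intro a; simpa using one_mem V,
            mul_mem' := ?_, inv_mem' := ?_ }, ⟨?_⟩, ?_, ?_⟩
  · intro x y hx hy a
    have h3 : a * (x * y) * a⁻¹ = (a * x * a⁻¹) * (a * y * a⁻¹) := by group
    rw [h3]
    exact mul_mem (hx a) (hy a)
  · intro x hx a
    have h3 : a * x⁻¹ * a⁻¹ = (a * x * a⁻¹)⁻¹ := by group
    rw [h3]
    exact inv_mem (hx a)
  · -- normality
    intro n hn g a
    have h3 : a * (g * n * g⁻¹) * a⁻¹ = (a * g) * n * (a * g)⁻¹ := by group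
    rw [h3]
    exact hn (a * g)
  · -- openness
    apply Subgroup.isOpen_of_mem_nhds (g := (1:G))
    have hballopen : IsOpen (@Metric.ball G m.toPseudoMetricSpace 1 ε) := by
      have := @Metric.isOpen_ball G m.toPseudoMetricSpace 1 ε
      rwa [htop] at this
    refine Filter.mem_of_superset (hballopen.mem_nhds ?_) ?_
    · show m.dist 1 1 < ε
      rw [m.dist_self]; exact hε
    · intro x hx a
      apply hball
      show m.dist (a * x * a⁻¹) 1 < ε
      rw [hconj a x]
      exact hx
  · -- contained in U
    intro g hg
    have h4 := hg 1
    rw [one_mul, inv_one, mul_one] at h4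
    exact hVU h4

/-- Given a neighborhood basis of open normal subgroups, `ρ(𝒢) ≤ ω` for every `𝒢`. -/
lemma rho_le_omega_of_normal_basis
    (hnb : ∀ U ∈ nhds (1 : G), ∃ N : Subgroup G, N.Normal ∧ IsOpen (N : Set G) ∧ (N : Set G) ⊆ U)
    (𝒢 : Dgnb G) : rhoDgnb 𝒢 ≤ Ordinal.omega0 := by
  have hex : ∀ k : ℕ, ∃ M : ℕ, ∀ g ∈ 𝒢.seq M, ∀ z : G ⧸ 𝒢.seq k, g • z = z := by
    intro k
    obtain ⟨N, hN, hNopen, hNsub⟩ := hnb (𝒢.seq k) ((𝒢.isOpen k).mem_nhds (one_mem _))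
    obtain ⟨M, hM⟩ := 𝒢.basis N (hNopen.mem_nhds (one_mem N))
    refine ⟨M, fun g hg z => ?_⟩
    obtain ⟨a, ha⟩ := QuotientGroup.mk_surjective z
    rw [← ha]
    show (QuotientGroup.mk (g * a) : G ⧸ 𝒢.seq k) = QuotientGroup.mk a
    rw [QuotientGroup.eq]
    have h5 : (g * a)⁻¹ * a = a⁻¹ * g⁻¹ * a⁻¹⁻¹ := by group
    rw [h5]
    exact hNsub (hN.conj_mem g⁻¹ (inv_mem (hM hg)) a⁻¹)
  choose M hM using hex
  exact rho_le_of_bound hM (fun k => (Ordinal.nat_lt_omega0 (M k)).le)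

/-- If `G` is 1-CLI then every neighborhood of 1 contains an open normal subgroup. -/
lemma normal_basis_of_one (hna : IsNonArch G) [PolishSpace G] (hcli : IsCLI G)
    (h1 : IsAlphaCLI G 1) :
    ∀ U ∈ nhds (1 : G), ∃ N : Subgroup G, N.Normal ∧ IsOpen (N : Set G) ∧ (N : Set G) ⊆ U := by
  obtain ⟨𝒢⟩ := exists_dgnb hna
  have hwf := wf_of_cli hcli 𝒢
  have hρ : rhoDgnb 𝒢 ≤ Ordinal.omega0 := by
    have := h1 𝒢
    rwa [mul_one] at this
  intro U hU
  obtain ⟨k, hk⟩ := 𝒢.basis U hU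
  -- key claim: some G_m acts trivially on G / G_k
  have hkey : ∃ m : ℕ, ∀ g ∈ 𝒢.seq m, ∀ z : G ⧸ 𝒢.seq k, g • z = z := by
    by_contra hcon
    push_neg at hcon
    obtain ⟨gg, hgg, zz, hzz⟩ : ∃ g ∈ 𝒢.seq 0, ∃ z : G ⧸ 𝒢.seq k, g • z ≠ z := by
      obtain ⟨g, hg, z, hz⟩ := hcon 0
      exact ⟨g, hg, z, hz⟩
    set root := mkNode 𝒢 0 k zz gg (dgnb_mono 𝒢 (Nat.zero_le 0) hgg) hzz with hroot
    have hge : ∀ N : ℕ, (N : Ordinal) ≤ hwf.rank root := by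
      intro N
      obtain ⟨g, hg, z, hz⟩ := hcon N
      have h6 := exists_rank_ge hwf hg hz
      rwa [mkNode_zero_eq (dgnb_mono 𝒢 (Nat.zero_le N) hg)
        (dgnb_mono 𝒢 (Nat.zero_le 0) hgg) hz hzz] at h6
    have homega : Ordinal.omega0 ≤ hwf.rank root := Ordinal.omega0_le.2 hge
    have hlt : hwf.rank root < Ordinal.omega0 := by
      have h7 : Order.succ (hwf.rank root) ≤ rhoDgnb 𝒢 := by
        rw [rhoDgnb_def]
        unfold rhoRel
        rw [dif_pos hwf]
        exact Ordinal.le_iSup _ root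
      exact lt_of_lt_of_le (Order.lt_succ _) (h7.trans hρ)
    exact absurd homega (not_le.2 hlt)
  obtain ⟨mm, hmm⟩ := hkey
  refine ⟨{ carrier := {g | ∀ a : G, a⁻¹ * g * a ∈ 𝒢.seq k},
            one_mem' := by intro a; simpa using one_mem (𝒢.seq k),
            mul_mem' := ?_, inv_mem' := ?_ }, ⟨?_⟩, ?_, ?_⟩
  · intro x y hx hy a
    have h3 : a⁻¹ * (x * y) * a = (a⁻¹ * x * a) * (a⁻¹ * y * a) := by group
    rw [h3]
    exact mul_mem (hx a) (hy a)
  · intro x hx a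
    have h3 : a⁻¹ * x⁻¹ * a = (a⁻¹ * x * a)⁻¹ := by group
    rw [h3]
    exact inv_mem (hx a)
  · intro n hn g a
    have h3 : a⁻¹ * (g * n * g⁻¹) * a = (g⁻¹ * a)⁻¹ * n * (g⁻¹ * a) := by group
    rw [h3]
    exact hn (g⁻¹ * a)
  · -- open: it contains `𝒢.seq mm`
    apply Subgroup.isOpen_mono (H₁ := 𝒢.seq mm) ?_ (𝒢.isOpen mm)
    intro g hg a
    have h8 : g • (QuotientGroup.mk a : G ⧸ 𝒢.seq k) = QuotientGroup.mk a := hmm g hg _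
    have h9 : (QuotientGroup.mk (g * a) : G ⧸ 𝒢.seq k) = QuotientGroup.mk a := h8
    rw [QuotientGroup.eq] at h9
    have h10 : a⁻¹ * g * a = ((g * a)⁻¹ * a)⁻¹ := by group
    rw [h10]
    exact inv_mem h9
  · intro g hg
    have h4 := hg 1
    rw [inv_one, one_mul, mul_one] at h4
    exact hk h4

end StmtAux

namespace StmtAux

variable {G : Type} [Group G] [TopologicalSpace G] [IsTopologicalGroup G]

set_option maxHeartbeats 1000000 in
lemma tsi_of_normal_basis [PolishSpace G] (hcli : IsCLI G)
    (hnb : ∀ U ∈ nhds (1 : G), ∃ N : Subgroup G, N.Normal ∧ IsOpen (N : Set G) ∧ (N : Set G) ⊆ U) :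
    IsTSI G := by
  classical
  obtain ⟨𝒩, hnorm⟩ := exists_dgnb_pred Subgroup.Normal inferInstance
    (fun H K hH hK => ⟨fun n hn g => by
        rw [Subgroup.mem_inf] at hn ⊢
        exact ⟨hH.conj_mem n hn.1 g, hK.conj_mem n hn.2 g⟩⟩) hnb
  -- the valuation
  let J : G → ℕ := fun g => if h : ∃ n, g ∉ 𝒩.seq n then Nat.find h else 0
  have hJmem : ∀ g : G, g ≠ 1 → ∀ n : ℕ, (g ∈ 𝒩.seq n ↔ n < J g) := by
    intro g hg n
    have h : ∃ n, g ∉ 𝒩.seq n := exists_seq_not_mem 𝒩 hg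
    simp only [J, dif_pos h]
    constructor
    · intro hmem
      by_contra hn
      push_neg at hn
      exact Nat.find_spec h (dgnb_mono 𝒩 hn hmem)
    · intro hn
      by_contra hmem
      exact Nat.find_min h hn hmem
  have hJcongr : ∀ g h : G, g ≠ 1 → h ≠ 1 → (∀ n, g ∈ 𝒩.seq n ↔ h ∈ 𝒩.seq n) → J g = J h := by
    intro g h hg hh hiff
    rcases lt_trichotomy (J g) (J h) with hlt | heq | hlt
    · have h1 : g ∈ 𝒩.seq (J g) := (hiff _).2 ((hJmem h hh _).2 hlt)
      exact absurd ((hJmem g hg _).1 h1) (lt_irrefl _)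
    · exact heq
    · have h1 : h ∈ 𝒩.seq (J h) := (hiff _).1 ((hJmem g hg _).2 hlt)
      exact absurd ((hJmem h hh _).1 h1) (lt_irrefl _)
  -- the distance function
  obtain ⟨d, hddef⟩ : ∃ d : G → G → ℝ,
      ∀ g h, d g h = if g = h then 0 else ((1:ℝ)/2) ^ (J (g⁻¹ * h)) :=
    ⟨_, fun _ _ => rfl⟩
  have hhalf0 : (0:ℝ) < 1/2 := by norm_num
  have hhalf1 : (1:ℝ)/2 < 1 := by norm_num
  have hdnonneg : ∀ g h, 0 ≤ d g h := by
    intro g h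
    rw [hddef]
    by_cases hgh : g = h
    · rw [if_pos hgh]
    · rw [if_neg hgh]
      exact (pow_pos hhalf0 _).le
  have hdself : ∀ g, d g g = 0 := fun g => by rw [hddef, if_pos rfl]
  have hkey : ∀ (g h : G) (n : ℕ), (d g h < ((1:ℝ)/2) ^ n ↔ g⁻¹ * h ∈ 𝒩.seq n) := by
    intro g h n
    rw [hddef]
    by_cases hgh : g = h
    · subst hgh
      rw [if_pos rfl, inv_mul_cancel]
      simp [pow_pos hhalf0 n, one_mem]
    · have hx1 : g⁻¹ * h ≠ 1 := fun hcon => hgh (by rwa [inv_mul_eq_one] at hcon)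
      rw [if_neg hgh, pow_lt_pow_iff_right_of_lt_one₀ hhalf0 hhalf1]
      exact (hJmem _ hx1 n).symm
  have hinvmem : ∀ (x : G) (n : ℕ), x⁻¹ ∈ 𝒩.seq n ↔ x ∈ 𝒩.seq n := by
    intro x n
    constructor
    · intro hm; simpa using inv_mem hm
    · intro hm; exact inv_mem hm
  have hdsymm : ∀ g h, d g h = d h g := by
    intro g h
    by_cases hgh : g = h
    · subst hgh; rfl
    · have hgh' : h ≠ g := Ne.symm hgh
      rw [hddef, hddef, if_neg hgh, if_neg hgh']
      congr 1
      apply hJcongr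
      · exact fun hcon => hgh (by rwa [inv_mul_eq_one] at hcon)
      · exact fun hcon => hgh' (by rwa [inv_mul_eq_one] at hcon)
      · intro n
        rw [← hinvmem (h⁻¹ * g) n, mul_inv_rev, inv_inv]
  have hultra : ∀ g h k : G, d g k ≤ max (d g h) (d h k) := by
    intro g h k
    by_cases hgk : g = k
    · subst hgk
      rw [hdself]
      exact le_trans (hdnonneg g h) (le_max_left _ _)
    by_cases hgh : g = h
    · subst hgh
      exact le_max_right _ _
    by_cases hhk : h = k
    · subst hhk
      exact le_max_left _ _
    have hx1 : g⁻¹ * h ≠ 1 := fun hcon => hgh (by rwa [inv_mul_eq_one] at hcon)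
    have hy1 : h⁻¹ * k ≠ 1 := fun hcon => hhk (by rwa [inv_mul_eq_one] at hcon)
    have hz1 : g⁻¹ * k ≠ 1 := fun hcon => hgk (by rwa [inv_mul_eq_one] at hcon)
    have hge : min (J (g⁻¹ * h)) (J (h⁻¹ * k)) ≤ J (g⁻¹ * k) := by
      by_contra hlt
      push_neg at hlt
      have h1 : g⁻¹ * h ∈ 𝒩.seq (J (g⁻¹ * k)) :=
        (hJmem _ hx1 _).2 (lt_of_lt_of_le hlt (min_le_left _ _))
      have h2 : h⁻¹ * k ∈ 𝒩.seq (J (g⁻¹ * k)) :=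
        (hJmem _ hy1 _).2 (lt_of_lt_of_le hlt (min_le_right _ _))
      have h3 : g⁻¹ * k ∈ 𝒩.seq (J (g⁻¹ * k)) := by
        have h4 := mul_mem h1 h2
        rwa [show (g⁻¹ * h) * (h⁻¹ * k) = g⁻¹ * k by group] at h4
      exact lt_irrefl _ ((hJmem _ hz1 _).1 h3)
    rw [hddef g k, hddef g h, hddef h k, if_neg hgk, if_neg hgh, if_neg hhk]
    have hmono : ((1:ℝ)/2) ^ (J (g⁻¹ * k)) ≤ ((1:ℝ)/2) ^ (min (J (g⁻¹ * h)) (J (h⁻¹ * k))) :=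
      pow_le_pow_of_le_one hhalf0.le hhalf1.le hge
    rcases le_total (J (g⁻¹ * h)) (J (h⁻¹ * k)) with hc | hc
    · rw [min_eq_left hc] at hmono
      exact hmono.trans (le_max_left _ _)
    · rw [min_eq_right hc] at hmono
      exact hmono.trans (le_max_right _ _)
  have htriangle : ∀ g h k : G, d g k ≤ d g h + d h k := fun g h k =>
    (hultra g h k).trans (max_le_add_of_nonneg (hdnonneg _ _) (hdnonneg _ _))
  have heq0 : ∀ g h : G, d g h = 0 → g = h := by
    intro g h hd0
    by_contra hgh
    rw [hddef, if_neg hgh] at hd0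
    exact (pow_pos hhalf0 _).ne' hd0
  -- topology compatibility
  have hcoset_open : ∀ (x : G) (n : ℕ), IsOpen {y : G | x⁻¹ * y ∈ 𝒩.seq n} := by
    intro x n
    exact (𝒩.isOpen n).preimage (continuous_const.mul continuous_id)
  have Htop : ∀ s : Set G, IsOpen s ↔ ∀ x ∈ s, ∃ ε > 0, ∀ y, d x y < ε → y ∈ s := by
    intro s
    constructor
    · intro hs x hx
      have hopen : IsOpen {h : G | x * h ∈ s} := hs.preimage (continuous_const.mul continuous_id)
      have h1 : {h : G | x * h ∈ s} ∈ nhds (1 : G) := hopen.mem_nhds (by simpa using hx)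
      obtain ⟨n, hn⟩ := 𝒩.basis _ h1
      refine ⟨((1:ℝ)/2) ^ n, pow_pos hhalf0 n, fun y hy => ?_⟩
      have h2 : x⁻¹ * y ∈ 𝒩.seq n := (hkey x y n).1 hy
      have h3 : x * (x⁻¹ * y) ∈ s := hn h2
      rwa [mul_inv_cancel_left] at h3
    · intro hcond
      rw [isOpen_iff_mem_nhds]
      intro x hx
      obtain ⟨ε, hε, hsub⟩ := hcond x hx
      obtain ⟨n, hn⟩ := exists_pow_lt_of_lt_one hε hhalf1
      have hmemx : x ∈ {y : G | x⁻¹ * y ∈ 𝒩.seq n} := by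
        show x⁻¹ * x ∈ 𝒩.seq n
        rw [inv_mul_cancel]
        exact one_mem _
      refine Filter.mem_of_superset ((hcoset_open x n).mem_nhds hmemx) ?_
      intro y hy
      exact hsub y (lt_trans ((hkey x y n).2 hy) hn)
  -- the metric space
  let m : MetricSpace G := MetricSpace.ofDistTopology d hdself hdsymm htriangle Htop heq0
  -- completeness
  have hcomplete : @CompleteSpace G m.toUniformSpace := by
    apply @Metric.complete_of_cauchySeq_tendsto G m.toPseudoMetricSpace
    intro u hu
    rw [@Metric.cauchySeq_iff G ℕ m.toPseudoMetricSpace _ _] at hu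
    obtain ⟨m₀, htop₀, hcomp₀, hinv₀⟩ := hcli
    have hcs : @CauchySeq G ℕ m₀.toUniformSpace _ u := by
      rw [@Metric.cauchySeq_iff G ℕ m₀.toPseudoMetricSpace _ _]
      intro ε hε
      have hball : {w : G | m₀.dist w 1 < ε} ∈ nhds (1 : G) := by
        have hopen := @Metric.isOpen_ball G m₀.toPseudoMetricSpace 1 ε
        rw [htop₀] at hopen
        refine hopen.mem_nhds ?_
        show m₀.dist 1 1 < ε
        rw [m₀.dist_self]; exact hε
      obtain ⟨j, hj⟩ := 𝒩.basis _ hball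
      obtain ⟨N, hN⟩ := hu (((1:ℝ)/2) ^ j) (pow_pos hhalf0 j)
      refine ⟨N, fun a ha b hb => ?_⟩
      have h2 : (u a)⁻¹ * u b ∈ 𝒩.seq j := (hkey _ _ _).1 (hN a ha b hb)
      have h3 : m₀.dist (u a) (u b) = m₀.dist 1 ((u a)⁻¹ * u b) := by
        have h4 := hinv₀ (u a) 1 ((u a)⁻¹ * u b)
        rw [mul_one, mul_inv_cancel_left] at h4
        exact h4
      show m₀.dist (u a) (u b) < ε
      rw [h3, m₀.dist_comm]
      exact hj h2
    obtain ⟨c, hc⟩ := @cauchySeq_tendsto_of_complete G ℕ m₀.toUniformSpace _ hcomp₀ _ hcs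
    rw [htop₀] at hc
    exact ⟨c, hc⟩
  -- invariance
  have hleft : ∀ g h k : G, d (g * h) (g * k) = d h k := by
    intro g h k
    rw [hddef, hddef]
    rw [show (g * h)⁻¹ * (g * k) = h⁻¹ * k by group]
    exact if_congr (mul_right_inj g) rfl rfl
  have hconjmem : ∀ (g x : G) (n : ℕ), (g⁻¹ * x * g ∈ 𝒩.seq n ↔ x ∈ 𝒩.seq n) := by
    intro g x n
    constructor
    · intro hm
      have h5 := (hnorm n).conj_mem _ hm g
      rwa [show g * (g⁻¹ * x * g) * g⁻¹ = x by group] at h5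
    · intro hm
      have h5 := (hnorm n).conj_mem x hm g⁻¹
      rwa [show g⁻¹ * x * g⁻¹⁻¹ = g⁻¹ * x * g by rw [inv_inv]] at h5
  have hright : ∀ g h k : G, d (h * g) (k * g) = d h k := by
    intro g h k
    rw [hddef, hddef]
    rw [show (h * g)⁻¹ * (k * g) = g⁻¹ * (h⁻¹ * k) * g by group]
    by_cases hhk : h = k
    · subst hhk
      rw [if_pos rfl, if_pos rfl]
    · have hne2 : h * g ≠ k * g := fun hcon => hhk (mul_right_cancel hcon)
      rw [if_neg hne2, if_neg hhk]
      congr 1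
      apply hJcongr
      · intro hcon
        apply hhk
        have h6 : h⁻¹ * k = g * (g⁻¹ * (h⁻¹ * k) * g) * g⁻¹ := by group
        rw [hcon, mul_one, mul_inv_cancel] at h6
        rwa [inv_mul_eq_one] at h6
      · exact fun hcon => hhk (by rwa [inv_mul_eq_one] at hcon)
      · intro n
        exact hconjmem g (h⁻¹ * k) n
  exact ⟨m, rfl, hcomplete, fun g h k => ⟨hleft g h k, hright g h k⟩⟩

end StmtAux

open StmtAux

theorem statement_0 (G : Type) [Group G] [TopologicalSpace G] [IsTopologicalGroup G]
    [PolishSpace G] (hna : IsNonArch G) (hcli : IsCLI G) :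
    (IsAlphaCLI G 0 ↔ ∀ g : G, g = 1) ∧
    (IsLAlphaCLI G 0 ↔ DiscreteTopology G) ∧
    (IsAlphaCLI G 1 ↔ IsTSI G) := by
  refine ⟨⟨?_, ?_⟩, ⟨?_, ?_⟩, ⟨?_, ?_⟩⟩
  · -- 0-CLI → trivial
    intro h0 g
    by_contra hg
    obtain ⟨𝒢⟩ := exists_dgnb hna
    have hwf := wf_of_cli hcli 𝒢
    obtain ⟨k, hk⟩ := exists_seq_not_mem 𝒢 hg
    have hgtop : g ∈ 𝒢.seq 0 := by rw [𝒢.zero_eq_top]; exact Subgroup.mem_top g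
    have hne : g • (QuotientGroup.mk 1 : G ⧸ 𝒢.seq k) ≠ QuotientGroup.mk 1 := by
      intro hcon
      have h1 : (QuotientGroup.mk (g * 1) : G ⧸ 𝒢.seq k) = QuotientGroup.mk 1 := hcon
      rw [QuotientGroup.eq] at h1
      apply hk
      have h2 : (g * 1)⁻¹ * 1 = g⁻¹ := by group
      rw [h2] at h1
      simpa using inv_mem h1
    have h3 := lt_rho hwf hgtop hne
    have h4 := h0 𝒢
    rw [mul_zero] at h4
    simp only [Nat.cast_zero] at h3
    exact absurd (lt_of_lt_of_le h3 h4) (lt_irrefl _)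
  · -- trivial → 0-CLI
    intro htriv 𝒢
    rw [mul_zero]
    have hempty : IsEmpty (TreeNode (XX 𝒢) (EE 𝒢)) := by
      refine ⟨fun p => ?_⟩
      apply (wit_spec p).2
      rw [(wit_spec p).1]
      ext y
      simp only [Set.mem_setOf_eq, Set.mem_singleton_iff]
      constructor
      · rintro ⟨g, -, rfl⟩
        rw [htriv g, one_smul]
      · rintro rfl
        exact ⟨1, one_mem _, by rw [one_smul]⟩
    have hwf : WellFounded (Function.swap (nodeLT (EE 𝒢))) :=
      ⟨fun a => (hempty.false a).elim⟩
    rw [rhoDgnb_def]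
    unfold rhoRel
    rw [dif_pos hwf]
    rw [ciSup_of_empty]
    exact le_rfl
  · -- L-0-CLI → discrete
    intro hL
    by_contra hnd
    obtain ⟨𝒢⟩ := exists_dgnb hna
    have hwf := wf_of_cli hcli 𝒢
    have hnontriv : ∀ n, ∃ g ∈ 𝒢.seq n, g ≠ 1 := by
      intro n
      by_contra hcon
      push_neg at hcon
      have hbot : 𝒢.seq n = ⊥ := (Subgroup.eq_bot_iff_forall _).2 hcon
      apply hnd
      rw [discreteTopology_iff_isOpen_singleton_one]
      have := 𝒢.isOpen n
      rwa [hbot, Subgroup.coe_bot] at this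
    have homega : Ordinal.omega0 ≤ rhoDgnb 𝒢 := by
      rw [Ordinal.omega0_le]
      intro N
      obtain ⟨g, hgN, hg1⟩ := hnontriv N
      obtain ⟨k, hk⟩ := exists_seq_not_mem 𝒢 hg1
      have hne : g • (QuotientGroup.mk 1 : G ⧸ 𝒢.seq k) ≠ QuotientGroup.mk 1 := by
        intro hcon
        have h1 : (QuotientGroup.mk (g * 1) : G ⧸ 𝒢.seq k) = QuotientGroup.mk 1 := hcon
        rw [QuotientGroup.eq] at h1
        apply hk
        have h2 : (g * 1)⁻¹ * 1 = g⁻¹ := by group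
        rw [h2] at h1
        simpa using inv_mem h1
      exact (lt_rho hwf hgN hne).le
    have h5 := hL 𝒢
    rw [mul_zero] at h5
    have h6 := omega0_le_omegaPart homega
    have h7 : (0 : Ordinal) < Ordinal.omega0 := Ordinal.omega0_pos
    exact absurd (lt_of_lt_of_le h7 h6) (not_lt.2 h5)
  · -- discrete → L-0-CLI
    intro hdisc 𝒢
    rw [mul_zero]
    have h1 : IsOpen ({1} : Set G) := isOpen_discrete _
    obtain ⟨N, hN⟩ := 𝒢.basis {1} (h1.mem_nhds rfl)
    have hM : ∀ k : ℕ, ∀ g ∈ 𝒢.seq N, ∀ z : G ⧸ 𝒢.seq k, g • z = z := by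
      intro k g hg z
      have : g = 1 := hN hg
      rw [this, one_smul]
    have h2 : rhoDgnb 𝒢 ≤ ((N : ℕ) : Ordinal) :=
      rho_le_of_bound (M := fun _ => N) (fun k => hM k) (fun _ => le_rfl)
    have h3 : rhoDgnb 𝒢 < Ordinal.omega0 := lt_of_le_of_lt h2 (Ordinal.nat_lt_omega0 N)
    rw [omegaPart_eq_zero h3]
  · -- 1-CLI → TSI
    intro h1
    exact tsi_of_normal_basis hcli (normal_basis_of_one hna hcli h1)
  · -- TSI → 1-CLI
    intro htsi 𝒢
    rw [mul_one]
    exact rho_le_omega_of_normal_basis (normal_basis_of_tsi hna htsi) 𝒢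

end
end

section
/- Let G be a non-archimedean CLI Polish group, X a countable discrete Polish G-space, and 𝒢 = (G_n) ∈ dgnb(G). Then ρ(T_𝒢^X) ≤ ρ(𝒢). -/
noncomputable section

/-! ### Auxiliary material for `statement_11` -/

section Aux11

set_option linter.deprecated false

/-- Dependent-choice style construction of a sequence. -/
theorem aux11_exists_seq_rec {α : Type*} (P : ℕ → α → Prop) (R : ℕ → α → α → Prop)
    (h0 : ∃ a, P 0 a) (hs : ∀ n a, P n a → ∃ b, P (n + 1) b ∧ R n a b) :
    ∃ f : ℕ → α, (∀ n, P n (f n)) ∧ ∀ n, R n (f n) (f (n + 1)) := by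
  choose f hf hR using hs
  obtain ⟨a0, ha0⟩ := h0
  let g : ∀ n, {a // P n a} := fun n =>
    Nat.rec ⟨a0, ha0⟩ (fun n p => ⟨f n p.1 p.2, hf n p.1 p.2⟩) n
  exact ⟨fun n => (g n).1, fun n => (g n).2, fun n => hR n (g n).1 (g n).2⟩

theorem Dgnb.seq_le {G : Type*} [Group G] [TopologicalSpace G] (𝒢 : Dgnb G) {i j : ℕ}
    (h : i ≤ j) : 𝒢.seq j ≤ 𝒢.seq i := by
  induction j, h using Nat.le_induction with
  | base => exact le_rfl
  | succ j hij ih => exact le_trans (𝒢.antitone j) ih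

/-- The defining relation sequence of the tree `T_𝒢^{X(𝒢)}`. -/
def ECal {G : Type} [Group G] [TopologicalSpace G] (𝒢 : Dgnb G) :
    ℕ → (Σ k : ℕ, G ⧸ 𝒢.seq k) → (Σ k : ℕ, G ⧸ 𝒢.seq k) → Prop :=
  fun n p q => ∃ g ∈ 𝒢.seq n, q = ⟨p.1, g • p.2⟩

variable {G : Type} [Group G] [TopologicalSpace G] (𝒢 : Dgnb G)
variable {X : Type} [MulAction G X]

/-- If the `G_n`-orbit of the coset `cG_k` is a singleton and `G_k` stabilizes `x`, then the
`G_n`-orbit of `c • x` is a singleton. -/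
theorem aux11_class_singleton {n : ℕ} (x : X) (c : G) (k : ℕ)
    (hk : ∀ h ∈ 𝒢.seq k, h • x = x)
    (h : {q | ECal 𝒢 n ⟨k, (c : G ⧸ 𝒢.seq k)⟩ q}
        = {(⟨k, (c : G ⧸ 𝒢.seq k)⟩ : Σ k, G ⧸ 𝒢.seq k)}) :
    {y | dgnbRel 𝒢 X n (c • x) y} = {c • x} := by
  ext y
  simp only [Set.mem_setOf_eq, Set.mem_singleton_iff]
  constructor
  · rintro ⟨h', hh', rfl⟩
    have hmem : (⟨k, h' • (c : G ⧸ 𝒢.seq k)⟩ : Σ k, G ⧸ 𝒢.seq k)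
        ∈ {q | ECal 𝒢 n ⟨k, (c : G ⧸ 𝒢.seq k)⟩ q} := ⟨h', hh', rfl⟩
    rw [h] at hmem
    have h2 : h' • (c : G ⧸ 𝒢.seq k) = (c : G ⧸ 𝒢.seq k) := by
      have := (Sigma.mk.inj_iff.mp hmem).2
      exact eq_of_heq this
    rw [MulAction.Quotient.smul_mk, smul_eq_mul] at h2
    have h3 : (h' * c)⁻¹ * c ∈ 𝒢.seq k := QuotientGroup.eq.mp h2
    have h4 : c⁻¹ * h' * c ∈ 𝒢.seq k := by
      have := inv_mem h3
      have he : ((h' * c)⁻¹ * c)⁻¹ = c⁻¹ * h' * c := by group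
      rwa [he] at this
    have h5 := hk _ h4
    calc h' • (c • x) = (c * (c⁻¹ * h' * c)) • x := by
          rw [smul_smul]; congr 1; group
      _ = c • ((c⁻¹ * h' * c) • x) := by rw [mul_smul]
      _ = c • x := by rw [h5]
  · rintro rfl
    exact ⟨1, one_mem _, one_smul _ _⟩

/-- The covering relation between nodes of `T_𝒢^X` and nodes of `T_𝒢^{X(𝒢)}`. -/
def Cover11 (s : TreeNode X (dgnbRel 𝒢 X))
    (t : TreeNode (Σ k : ℕ, G ⧸ 𝒢.seq k) (ECal 𝒢)) : Prop :=
  ∃ (x : X) (k : ℕ) (c : G),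
    t.1.1 = s.1.1 ∧
    (∀ h ∈ 𝒢.seq k, h • x = x) ∧
    s.1.2 = {y | dgnbRel 𝒢 X s.1.1 (c • x) y} ∧
    t.1.2 = {q | ECal 𝒢 s.1.1 ⟨k, (c : G ⧸ 𝒢.seq k)⟩ q}

theorem aux11_cover_exists (hstab : ∀ x : X, ∃ k, ∀ h ∈ 𝒢.seq k, h • x = x)
    (s : TreeNode X (dgnbRel 𝒢 X)) : ∃ t, Cover11 𝒢 s t := by
  obtain ⟨x, hx, hne⟩ := s.2
  obtain ⟨k, hk⟩ := hstab x
  have hbase : s.1.2 = {y | dgnbRel 𝒢 X s.1.1 (((1 : G)) • x) y} := by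
    rw [one_smul]; exact hx
  have hne' : {q | ECal 𝒢 s.1.1 ⟨k, ((1 : G) : G ⧸ 𝒢.seq k)⟩ q}
      ≠ {(⟨k, ((1 : G) : G ⧸ 𝒢.seq k)⟩ : Σ k, G ⧸ 𝒢.seq k)} := by
    intro hcon
    apply hne
    have h1 := aux11_class_singleton 𝒢 x (1 : G) k hk hcon
    rw [hbase, h1, one_smul]
  exact ⟨⟨(s.1.1, {q | ECal 𝒢 s.1.1 ⟨k, ((1 : G) : G ⧸ 𝒢.seq k)⟩ q}),
      ⟨⟨k, ((1 : G) : G ⧸ 𝒢.seq k)⟩, rfl, hne'⟩⟩, x, k, 1, rfl, hk, hbase, rfl⟩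

theorem aux11_cover_step (s s' : TreeNode X (dgnbRel 𝒢 X))
    (t : TreeNode (Σ k : ℕ, G ⧸ 𝒢.seq k) (ECal 𝒢))
    (hc : Cover11 𝒢 s t) (hlt : nodeLT (dgnbRel 𝒢 X) s s') :
    ∃ t', nodeLT (ECal 𝒢) t t' ∧ Cover11 𝒢 s' t' := by
  obtain ⟨x, k, c, ht1, hk, hs2, ht2⟩ := hc
  obtain ⟨hn, hsub⟩ := hlt
  obtain ⟨x', hx', hne⟩ := s'.2
  have hx'mem : x' ∈ s'.1.2 := by rw [hx']; exact ⟨1, one_mem _, one_smul _ _⟩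
  have hx'C : x' ∈ s.1.2 := hsub hx'mem
  rw [hs2] at hx'C
  obtain ⟨h, hh, hhx⟩ := hx'C
  have hcx : (h * c) • x = x' := by rw [mul_smul]; exact hhx
  have hbase : s'.1.2 = {y | dgnbRel 𝒢 X s'.1.1 ((h * c) • x) y} := by
    rw [hcx]; exact hx'
  have hne' : {q | ECal 𝒢 s'.1.1 ⟨k, ((h * c : G) : G ⧸ 𝒢.seq k)⟩ q}
      ≠ {(⟨k, ((h * c : G) : G ⧸ 𝒢.seq k)⟩ : Σ k, G ⧸ 𝒢.seq k)} := by
    intro hcon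
    apply hne
    have h1 := aux11_class_singleton 𝒢 x (h * c) k hk hcon
    rw [hbase, h1, hcx]
  refine ⟨⟨(s'.1.1, {q | ECal 𝒢 s'.1.1 ⟨k, ((h * c : G) : G ⧸ 𝒢.seq k)⟩ q}),
      ⟨⟨k, ((h * c : G) : G ⧸ 𝒢.seq k)⟩, rfl, hne'⟩⟩,
    ⟨?_, ?_⟩, x, k, h * c, rfl, hk, hbase, rfl⟩
  · rw [ht1]; exact hn
  · rw [ht2]
    rintro q ⟨g', hg', rfl⟩
    refine ⟨g' * h, mul_mem (𝒢.seq_le hn.le hg') hh, ?_⟩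
    show (⟨k, g' • (((h * c : G) : G ⧸ 𝒢.seq k))⟩ : Σ k, G ⧸ 𝒢.seq k)
        = ⟨k, (g' * h) • ((c : G ⧸ 𝒢.seq k))⟩
    congr 1
    simp only [MulAction.Quotient.smul_mk, smul_eq_mul, mul_assoc]

theorem aux11_acc_of_cover {S T : Type} {ltS : S → S → Prop} {ltT : T → T → Prop}
    {Cov : S → T → Prop}
    (hstep : ∀ s s' t, Cov s t → ltS s s' → ∃ t', ltT t t' ∧ Cov s' t') :
    ∀ t, Acc (Function.swap ltT) t → ∀ s, Cov s t → Acc (Function.swap ltS) s := by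
  intro t ht
  induction ht with
  | intro t h ih =>
    intro s hcov
    constructor
    intro s' hs'
    obtain ⟨t', hlt', hcov'⟩ := hstep s s' t hcov hs'
    exact ih t' hlt' s' hcov'

theorem aux11_rank_le_of_cover {S T : Type} {ltS : S → S → Prop} {ltT : T → T → Prop}
    {Cov : S → T → Prop} (hT : WellFounded (Function.swap ltT))
    (hS : WellFounded (Function.swap ltS))
    (hstep : ∀ s s' t, Cov s t → ltS s s' → ∃ t', ltT t t' ∧ Cov s' t') :
    ∀ t s, Cov s t → (hS.apply s).rank ≤ (hT.apply t).rank := by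
  intro t
  induction t using hT.induction with
  | _ t ih =>
    intro s hcov
    rw [(hS.apply s).rank_eq]
    apply Ordinal.iSup_le
    rintro ⟨s', hs'⟩
    obtain ⟨t', hlt', hcov'⟩ := hstep s s' t hcov hs'
    have h1 : (hS.apply s').rank ≤ (hT.apply t').rank := ih t' hlt' s' hcov'
    have h2 : (hT.apply t').rank < (hT.apply t).rank := (hT.apply t).rank_lt_of_rel hlt'
    exact (Order.succ_le_succ h1).trans (Order.succ_le_of_lt h2)

theorem aux11_rhoRel_eq {T : Type} (lt : T → T → Prop)
    (h : WellFounded (Function.swap lt)) :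
    rhoRel lt = ⨆ s : T, Order.succ ((h.apply s).rank) := by
  rw [rhoRel]
  exact dif_pos h

/-- Well-foundedness of the tree `T_𝒢^{X(𝒢)}` for a CLI group. -/
theorem aux11_targetWF (G : Type) [Group G] [TopologicalSpace G] [IsTopologicalGroup G]
    (hcli : IsCLI G) (𝒢 : Dgnb G) :
    WellFounded (Function.swap (nodeLT (ECal 𝒢))) := by
  by_contra hwf
  haveI : IsTrans _ (Function.swap (nodeLT (ECal 𝒢))) :=
    ⟨fun a b c h1 h2 => ⟨h2.1.trans h1.1, h1.2.trans h2.2⟩⟩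
  haveI : IsIrrefl _ (Function.swap (nodeLT (ECal 𝒢))) :=
    ⟨fun a h => lt_irrefl _ h.1⟩
  haveI : IsStrictOrder _ (Function.swap (nodeLT (ECal 𝒢))) := {}
  rw [RelEmbedding.wellFounded_iff_isEmpty, not_isEmpty_iff] at hwf
  obtain ⟨f⟩ := hwf
  have hf : ∀ i, nodeLT (ECal 𝒢) (f i) (f (i + 1)) :=
    fun i => f.map_rel_iff.2 (Nat.lt_succ_self i)
  set n : ℕ → ℕ := fun i => (f i).1.1 with hn
  have hmono : ∀ i, n i < n (i + 1) := fun i => (hf i).1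
  have hnle : ∀ i, i ≤ n i := by
    intro i
    induction i with
    | zero => exact Nat.zero_le _
    | succ i ih => exact Nat.succ_le_of_lt (lt_of_le_of_lt ih (hmono i))
  have hnmono : Monotone n := monotone_nat_of_le_succ (fun i => (hmono i).le)
  have hsub : ∀ i, (f (i + 1)).1.2 ⊆ (f i).1.2 := fun i => (hf i).2
  set p : ℕ → (Σ k : ℕ, G ⧸ 𝒢.seq k) := fun i => ((f i).2).choose with hp
  have hp1 : ∀ i, (f i).1.2 = {q | ECal 𝒢 (n i) (p i) q} := fun i => ((f i).2).choose_spec.1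
  have hp2 : ∀ i, (f i).1.2 ≠ {p i} := fun i => ((f i).2).choose_spec.2
  have hpmem : ∀ i, p i ∈ (f i).1.2 := by
    intro i
    rw [hp1 i]
    exact ⟨1, one_mem _, by simp⟩
  have hpnext : ∀ i, p (i + 1) ∈ (f i).1.2 := fun i => hsub i (hpmem (i + 1))
  set k : ℕ := (p 0).1 with hkdef
  -- build a coherent sequence of coset representatives
  have h0 : ∃ b : G, p 0 = ⟨k, (b : G ⧸ 𝒢.seq k)⟩ := by
    obtain ⟨b, hb⟩ := QuotientGroup.mk_surjective (p 0).2
    refine ⟨b, ?_⟩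
    rw [hb]
  have hstep : ∀ i (b : G), p i = ⟨k, (b : G ⧸ 𝒢.seq k)⟩ →
      ∃ b' : G, p (i + 1) = ⟨k, (b' : G ⧸ 𝒢.seq k)⟩ ∧ b' * b⁻¹ ∈ 𝒢.seq (n i) := by
    intro i b hb
    have hmem := hpnext i
    rw [hp1 i] at hmem
    obtain ⟨g, hg, hq⟩ := hmem
    rw [hb] at hq
    have hq' : p (i + 1) = ⟨k, g • ((b : G ⧸ 𝒢.seq k))⟩ := hq
    have h2 : g • ((b : G ⧸ 𝒢.seq k)) = ((g * b : G) : G ⧸ 𝒢.seq k) := by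
      rw [MulAction.Quotient.smul_mk, smul_eq_mul]
    refine ⟨g * b, ?_, by simpa using hg⟩
    rw [hq', h2]
  obtain ⟨a, hPa, hRa⟩ := aux11_exists_seq_rec
    (fun i (b : G) => p i = ⟨k, (b : G ⧸ 𝒢.seq k)⟩)
    (fun i (b b' : G) => b' * b⁻¹ ∈ 𝒢.seq (n i)) h0 hstep
  have hprod : ∀ i j, i ≤ j → a j * (a i)⁻¹ ∈ 𝒢.seq (n i) := by
    intro i j hij
    induction j, hij using Nat.le_induction with
    | base => simpa using (𝒢.seq (n i)).one_mem
    | succ j hij ih =>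
      have h1 : a (j + 1) * (a j)⁻¹ ∈ 𝒢.seq (n i) :=
        𝒢.seq_le (hnmono hij) (hRa j)
      have := mul_mem h1 ih
      have he : a (j + 1) * (a j)⁻¹ * (a j * (a i)⁻¹) = a (j + 1) * (a i)⁻¹ := by group
      rwa [he] at this
  obtain ⟨m, hmt, hmc, hml⟩ := hcli
  let u : ℕ → G := fun i => (a i)⁻¹
  have hcau : @CauchySeq G ℕ m.toUniformSpace _ u := by
    refine (@Metric.cauchySeq_iff' G ℕ m.toPseudoMetricSpace _ _ u).mpr ?_
    intro ε hε
    have hBopen : IsOpen {z : G | m.dist z 1 < ε} := by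
      rw [← hmt]
      exact @Metric.isOpen_ball G m.toPseudoMetricSpace 1 ε
    have h1B : (1 : G) ∈ {z : G | m.dist z 1 < ε} := by
      show m.dist 1 1 < ε
      rw [m.dist_self]; exact hε
    obtain ⟨n₀, hn₀⟩ := 𝒢.basis _ (hBopen.mem_nhds h1B)
    refine ⟨n₀, fun j hj => ?_⟩
    have hw : a j * (a n₀)⁻¹ ∈ 𝒢.seq n₀ := 𝒢.seq_le (hnle n₀) (hprod n₀ j hj)
    have hb' : m.dist (a j * (a n₀)⁻¹) 1 < ε := hn₀ hw
    show m.dist (u j) (u n₀) < ε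
    have e1 : m.dist (u j) (u n₀) = m.dist (a j * (a n₀)⁻¹) 1 := by
      have h2 := hml (a j) (a j)⁻¹ (a n₀)⁻¹
      calc m.dist (u j) (u n₀) = m.dist (a j * (a j)⁻¹) (a j * (a n₀)⁻¹) := by rw [h2]
        _ = m.dist 1 (a j * (a n₀)⁻¹) := by rw [mul_inv_cancel]
        _ = m.dist (a j * (a n₀)⁻¹) 1 := m.dist_comm _ _
    rw [e1]
    exact hb'
  obtain ⟨x0, hx0⟩ := @cauchySeq_tendsto_of_complete G ℕ m.toUniformSpace _ hmc u hcau
  rw [hmt] at hx0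
  set glim : G := x0⁻¹ with hglim
  have hatend : Filter.Tendsto a Filter.atTop (nhds glim) := by
    have h2 := hx0.inv
    have he : (fun i => (u i)⁻¹) = a := funext fun i => inv_inv _
    rwa [he] at h2
  have hgmem : ∀ i, glim * (a i)⁻¹ ∈ 𝒢.seq (n i) := by
    intro i
    have hcl : IsClosed ((𝒢.seq (n i) : Set G)) :=
      (𝒢.seq (n i)).isClosed_of_isOpen (𝒢.isOpen _)
    have htd : Filter.Tendsto (fun j => a j * (a i)⁻¹) Filter.atTop
        (nhds (glim * (a i)⁻¹)) := hatend.mul_const _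
    exact hcl.mem_of_tendsto htd
      (Filter.eventually_atTop.mpr ⟨i, fun j hj => hprod i j hj⟩)
  -- the stabilizer of the limit coset is open
  have hqstab : ∃ n₀, ∀ h ∈ 𝒢.seq n₀,
      h • ((glim : G ⧸ 𝒢.seq k)) = (glim : G ⧸ 𝒢.seq k) := by
    have hcont : Continuous (fun h : G => glim⁻¹ * h⁻¹ * glim) := by
      exact ((continuous_const.mul continuous_inv).mul continuous_const)
    have hsetEq : {h : G | h • ((glim : G ⧸ 𝒢.seq k)) = (glim : G ⧸ 𝒢.seq k)}
        = (fun h : G => glim⁻¹ * h⁻¹ * glim) ⁻¹' (𝒢.seq k) := by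
      ext h
      simp only [Set.mem_setOf_eq, Set.mem_preimage, SetLike.mem_coe]
      rw [MulAction.Quotient.smul_mk, smul_eq_mul, QuotientGroup.eq]
      constructor
      · intro hmem
        have he : (h * glim)⁻¹ * glim = glim⁻¹ * h⁻¹ * glim := by group
        rwa [he] at hmem
      · intro hmem
        have he : (h * glim)⁻¹ * glim = glim⁻¹ * h⁻¹ * glim := by group
        rwa [← he] at hmem
    have hopen : IsOpen {h : G | h • ((glim : G ⧸ 𝒢.seq k)) = (glim : G ⧸ 𝒢.seq k)} := by
      rw [hsetEq]
      exact (𝒢.isOpen k).preimage hcont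
    have h1m : (1 : G) ∈ {h : G | h • ((glim : G ⧸ 𝒢.seq k)) = (glim : G ⧸ 𝒢.seq k)} :=
      one_smul _ _
    exact 𝒢.basis _ (hopen.mem_nhds h1m)
  obtain ⟨n₀, hstab⟩ := hqstab
  have hsub' : 𝒢.seq (n n₀) ≤ 𝒢.seq n₀ := 𝒢.seq_le (hnle n₀)
  have hfix : ∀ h' ∈ 𝒢.seq (n n₀),
      h' • (((a n₀ : G)) : G ⧸ 𝒢.seq k) = ((a n₀ : G) : G ⧸ 𝒢.seq k) := by
    intro h' hh'
    have hw : glim * (a n₀)⁻¹ ∈ 𝒢.seq (n n₀) := hgmem n₀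
    have hb : ((a n₀ : G) : G ⧸ 𝒢.seq k)
        = (glim * (a n₀)⁻¹)⁻¹ • ((glim : G ⧸ 𝒢.seq k)) := by
      have he : (glim * (a n₀)⁻¹)⁻¹ * glim = a n₀ := by group
      rw [MulAction.Quotient.smul_mk, smul_eq_mul, he]
    rw [hb, smul_smul]
    rw [hstab _ (hsub' (mul_mem hh' (inv_mem hw))), hstab _ (hsub' (inv_mem hw))]
  apply hp2 n₀
  rw [hp1 n₀, hPa n₀]
  ext q
  simp only [Set.mem_setOf_eq, Set.mem_singleton_iff]
  constructor
  · rintro ⟨h', hh', rfl⟩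
    show (⟨k, h' • (((a n₀ : G)) : G ⧸ 𝒢.seq k)⟩ : Σ k, G ⧸ 𝒢.seq k)
        = ⟨k, ((a n₀ : G) : G ⧸ 𝒢.seq k)⟩
    exact congrArg (Sigma.mk k) (hfix h' hh')
  · rintro rfl
    exact ⟨1, one_mem _, by simp⟩

end Aux11

theorem statement_11 (G : Type) [Group G] [TopologicalSpace G] [IsTopologicalGroup G]
    [PolishSpace G] (hna : IsNonArch G) (hcli : IsCLI G)
    (X : Type) [TopologicalSpace X] [DiscreteTopology X] [Countable X]
    [MulAction G X] [ContinuousSMul G X] (𝒢 : Dgnb G) :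
    treeRho X (dgnbRel 𝒢 X) ≤ rhoDgnb 𝒢 := by
  classical
  have hstab : ∀ x : X, ∃ k, ∀ h ∈ 𝒢.seq k, h • x = x := by
    intro x
    have hc : Continuous fun g : G => g • x := continuous_id.smul continuous_const
    have hopen : IsOpen {g : G | g • x = x} := by
      have he : {g : G | g • x = x} = (fun g : G => g • x) ⁻¹' {x} := rfl
      rw [he]
      exact (isOpen_discrete _).preimage hc
    have h1m : (1 : G) ∈ {g : G | g • x = x} := one_smul _ _
    obtain ⟨k, hk⟩ := 𝒢.basis _ (hopen.mem_nhds h1m)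
    exact ⟨k, fun h hh => hk hh⟩
  have hT : WellFounded (Function.swap (nodeLT (ECal 𝒢))) := aux11_targetWF G hcli 𝒢
  have hstep : ∀ (s s' : TreeNode X (dgnbRel 𝒢 X))
      (t : TreeNode (Σ k : ℕ, G ⧸ 𝒢.seq k) (ECal 𝒢)),
      Cover11 𝒢 s t → nodeLT (dgnbRel 𝒢 X) s s' →
      ∃ t', nodeLT (ECal 𝒢) t t' ∧ Cover11 𝒢 s' t' :=
    fun s s' t hc hl => aux11_cover_step 𝒢 s s' t hc hl
  have hS : WellFounded (Function.swap (nodeLT (dgnbRel 𝒢 X))) := by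
    constructor
    intro s
    obtain ⟨t, ht⟩ := aux11_cover_exists 𝒢 hstab s
    exact aux11_acc_of_cover hstep t (hT.apply t) s ht
  have hrank := aux11_rank_le_of_cover hT hS hstep
  show rhoRel (nodeLT (dgnbRel 𝒢 X)) ≤ rhoRel (nodeLT (ECal 𝒢))
  rw [aux11_rhoRel_eq _ hS, aux11_rhoRel_eq _ hT]
  apply Ordinal.iSup_le
  intro s
  obtain ⟨t, ht⟩ := aux11_cover_exists 𝒢 hstab s
  calc Order.succ ((hS.apply s).rank) ≤ Order.succ ((hT.apply t).rank) :=
        Order.succ_le_succ (hrank t s ht)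
    _ ≤ ⨆ t, Order.succ ((hT.apply t).rank) := Ordinal.le_iSup _ t

end
end
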